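/- Let Z be a compact Hausdorff space and h_1, …, h_k : Z → Z pairwise commuting surjective local homeomorphisms, with β_{c_i} := limsup_{j→∞} j^{-1} ln( max_{z∈Z} |h_i^{-j}(z)| ). Let r ∈ (0,∞)^k and β ∈ (0,∞) satisfy β r_i > β_{c_i} for all i, let ε be a finite regular Borel measure on Z, and let μ be a finite Borel measure on Z such that ∫_Z a dμ = Σ_{n∈ℕ^k} e^{-β r·n} ∫_Z ( Σ_{w ∈ (h^n)^{-1}(z)} a(w) ) dε(z) for every continuous a : Z → ℝ. Then: (i) μ satisfies the subinvariance relation, i.e. for every subset K ⊆ {1,…,k} and every continuous a : Z → [0,∞), Σ_{J ⊆ K} (-1)^{|J|} e^{-β Σ_{i∈J} r_i} ∫_Z ( Σ_{w ∈ (h^{e_J})^{-1}(z)} a(w) ) dμ(z) ≥ 0; and (ii) ε is recovered from μ: for every continuous a : Z → ℝ, ∫_Z a dε = Σ_{J ⊆ {1,…,k}} (-1)^{|J|} e^{-β Σ_{i∈J} r_i} ∫_Z ( Σ_{w ∈ (h^{e_J})^{-1}(z)} a(w) ) dμ(z). -/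

import Mathlib

open Filter MeasureTheory

/-- `h^m = h 0 ^[m 0] ∘ ⋯ ∘ h (k-1) ^[m (k-1)]`. -/
def compIter {Z : Type*} {k : ℕ} (h : Fin k → Z → Z) (m : Fin k → ℕ) : Z → Z :=
  (List.ofFn fun i => (h i)^[m i]).foldr (· ∘ ·) id

/-- `h^{e_J}`: the composition of the maps `h i` over `i ∈ J`. -/
def compSet {Z : Type*} {k : ℕ} (h : Fin k → Z → Z) (J : Finset (Fin k)) : Z → Z :=
  compIter h (fun i => if i ∈ J then 1 else 0)

/-- The critical inverse temperature
`β_c = limsup_{j→∞} j⁻¹ ln (max_z |f^{-j}(z)|)` of a map `f : Z → Z`. -/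
noncomputable def betaC {Z : Type*} (f : Z → Z) : ℝ :=
  Filter.limsup
    (fun j : ℕ => Real.log (⨆ z : Z, (Nat.card ((f^[j]) ⁻¹' {z}) : ℝ)) / j)
    Filter.atTop

section Aux

variable {Z : Type*} [TopologicalSpace Z]

theorem fiber_finite [CompactSpace Z] [T1Space Z] {f : Z → Z}
    (hf : IsLocalHomeomorph f) (z : Z) : (f ⁻¹' {z}).Finite := by
  have hfc : Continuous f := hf.continuous
  choose e he hfe using hf
  have hS : IsCompact (f ⁻¹' {z}) :=
    (IsClosed.preimage hfc isClosed_singleton).isCompact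
  obtain ⟨t, ht⟩ := hS.elim_finite_subcover (fun w : Z => (e w).source)
    (fun w => (e w).open_source) (fun u _ => Set.mem_iUnion.2 ⟨u, he u⟩)
  have hsub : ∀ w : Z, (f ⁻¹' {z} ∩ (e w).source).Subsingleton := by
    intro w u hu v hv
    apply (e w).injOn hu.2 hv.2
    rw [← hfe w]
    rw [show f u = z from hu.1, show f v = z from hv.1]
  refine Set.Finite.subset (Set.Finite.biUnion t.finite_toSet
    (fun w _ => (hsub w).finite)) ?_
  intro u hu
  obtain ⟨w, hw, hws⟩ := Set.mem_iUnion₂.mp (ht hu)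
  exact Set.mem_iUnion₂.mpr ⟨w, hw, hu, hws⟩

theorem transfer_eq_sum {f : Z → Z} {z : Z} (hfin : (f ⁻¹' {z}).Finite) (a : Z → ℝ) :
    ∑ᶠ w ∈ f ⁻¹' {z}, a w = ∑ w ∈ hfin.toFinset, a w := by
  rw [← finsum_mem_coe_finset, Set.Finite.coe_toFinset]

theorem transfer_continuous [CompactSpace Z] [T2Space Z] {f : Z → Z} (hf : IsLocalHomeomorph f)
    {a : Z → ℝ} (ha : Continuous a) :
    Continuous (fun z => ∑ᶠ w ∈ f ⁻¹' {z}, a w) := by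
  have hfin : ∀ z, (f ⁻¹' {z}).Finite := fiber_finite hf
  have hfc : Continuous f := hf.continuous
  rw [continuous_iff_continuousAt]
  intro z₀
  choose e he hfe using hf
  obtain ⟨U, hU, hUd⟩ := (hfin z₀).t2_separation
  set V : Z → Set Z := fun w => U w ∩ (e w).source with hV
  have hVo : ∀ w, IsOpen (V w) := fun w => ((hU w).2).inter (e w).open_source
  have hwV : ∀ w, w ∈ V w := fun w => ⟨(hU w).1, he w⟩
  have hew : ∀ w ∈ f ⁻¹' {z₀}, e w w = z₀ := by
    intro w hw; rw [← hfe w]; exact hw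
  have htgt : ∀ w ∈ f ⁻¹' {z₀}, z₀ ∈ (e w).target := by
    intro w hw
    rw [← hew w hw]; exact (e w).map_source (he w)
  set C : Set Z := (⋃ w ∈ f ⁻¹' {z₀}, V w)ᶜ with hC
  have hCc : IsCompact C := (IsOpen.isClosed_compl (isOpen_biUnion fun w _ => hVo w)).isCompact
  have hfC : IsClosed (f '' C) := (hCc.image hfc).isClosed
  have hz₀C : z₀ ∉ f '' C := by
    rintro ⟨u, huC, hu⟩
    exact huC (Set.mem_biUnion (show u ∈ f ⁻¹' {z₀} from hu) (hwV u))
  set W₁ : Z → Set Z := fun w => (e w).target ∩ (e w).symm ⁻¹' (V w) with hW₁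
  have hW₁o : ∀ w, IsOpen (W₁ w) :=
    fun w => (e w).continuousOn_symm.isOpen_inter_preimage (e w).open_target (hVo w)
  have hz₀W₁ : ∀ w ∈ f ⁻¹' {z₀}, z₀ ∈ W₁ w := by
    intro w hw
    refine ⟨htgt w hw, ?_⟩
    have : (e w).symm z₀ = w := by rw [← hew w hw]; exact (e w).left_inv (he w)
    simpa [this] using hwV w
  set W : Set Z := (f '' C)ᶜ ∩ ⋂ w ∈ f ⁻¹' {z₀}, W₁ w with hW
  have hWo : IsOpen W := hfC.isOpen_compl.inter ((hfin z₀).isOpen_biInter fun w _ => hW₁o w)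
  have hz₀W : z₀ ∈ W := ⟨hz₀C, Set.mem_iInter₂.mpr hz₀W₁⟩
  have hmemW₁ : ∀ z ∈ W, ∀ w ∈ f ⁻¹' {z₀}, z ∈ W₁ w := fun z hz => Set.mem_iInter₂.mp hz.2
  have key : ∀ z ∈ W, f ⁻¹' {z} = (fun w => (e w).symm z) '' (f ⁻¹' {z₀}) := by
    intro z hz
    ext u
    constructor
    · intro hu
      have huC : u ∉ C := fun hC' => hz.1 ⟨u, hC', hu.out⟩
      have : u ∈ ⋃ w ∈ f ⁻¹' {z₀}, V w := by
        simpa [hC] using huC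
      obtain ⟨w, hw, huV⟩ := Set.mem_iUnion₂.mp this
      refine ⟨w, hw, ?_⟩
      have : e w u = z := by rw [← hfe w]; exact hu.out
      rw [← this]
      exact (e w).left_inv huV.2
    · rintro ⟨w, hw, rfl⟩
      have hzW₁ : z ∈ W₁ w := hmemW₁ z hz w hw
      show f ((e w).symm z) ∈ ({z} : Set Z)
      rw [hfe w]
      exact (e w).right_inv hzW₁.1
  have hinj : ∀ z ∈ W, Set.InjOn (fun w => (e w).symm z) (f ⁻¹' {z₀}) := by
    intro z hz w hw w' hw' huv
    by_contra hne
    have h1 : (e w).symm z ∈ V w := (hmemW₁ z hz w hw).2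
    have h2 : (e w').symm z ∈ V w' := (hmemW₁ z hz w' hw').2
    have huv' : (e w).symm z = (e w').symm z := huv
    exact ((hUd hw hw' hne).le_bot ⟨h1.1, by rw [huv']; exact h2.1⟩)
  have heq : ∀ z ∈ W, (∑ᶠ w ∈ f ⁻¹' {z}, a w) = ∑ w ∈ (hfin z₀).toFinset, a ((e w).symm z) := by
    intro z hz
    rw [key z hz, finsum_mem_image (hinj z hz), transfer_eq_sum (hfin z₀)]
  have hcont : ContinuousAt (fun z => ∑ w ∈ (hfin z₀).toFinset, a ((e w).symm z)) z₀ := by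
    apply tendsto_finset_sum
    intro w hw
    have hw' : w ∈ f ⁻¹' {z₀} := by simpa using hw
    exact ha.continuousAt.comp ((e w).continuousAt_symm (htgt w hw'))
  exact hcont.congr (Filter.eventuallyEq_of_mem (hWo.mem_nhds hz₀W) (fun z hz => (heq z hz).symm))

theorem transfer_comp {f g : Z → Z} (hfin_f : ∀ z, (f ⁻¹' {z}).Finite)
    (hfin_g : ∀ z, (g ⁻¹' {z}).Finite) (a : Z → ℝ) (z : Z) :
    ∑ᶠ w ∈ (f ∘ g) ⁻¹' {z}, a w = ∑ᶠ v ∈ f ⁻¹' {z}, ∑ᶠ w ∈ g ⁻¹' {v}, a w := by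
  have hset : (f ∘ g) ⁻¹' {z} = ⋃ v ∈ f ⁻¹' {z}, g ⁻¹' {v} := by
    ext u; simp [Function.comp]
  rw [hset]
  exact finsum_mem_biUnion
    (fun v _ v' _ hne => Set.disjoint_left.mpr fun u hu hu' => hne (by rw [← hu.out, hu'.out]))
    (hfin_f z) (fun v _ => hfin_g v)


theorem compIter_succ {k : ℕ} (h : Fin (k + 1) → Z → Z) (m : Fin (k + 1) → ℕ) :
    compIter h m = (h 0)^[m 0] ∘ compIter (fun i => h i.succ) (fun i => m i.succ) := by
  unfold compIter
  rw [List.ofFn_succ]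
  rfl

theorem compIter_zero {k : ℕ} (h : Fin k → Z → Z) :
    compIter h (fun _ => 0) = id := by
  induction k with
  | zero => rfl
  | succ k ih => rw [compIter_succ, ih]; rfl

theorem comm_compIter {k : ℕ} {g : Z → Z} (h : Fin k → Z → Z)
    (hg : ∀ i, g ∘ h i = h i ∘ g) (m : Fin k → ℕ) :
    g ∘ compIter h m = compIter h m ∘ g := by
  induction k with
  | zero => rfl
  | succ k ih =>
    rw [compIter_succ]
    have h0 : Function.Commute g (h 0) := fun x => congrFun (hg 0) x
    have h0' : g ∘ (h 0)^[m 0] = (h 0)^[m 0] ∘ g := funext (h0.iterate_right (m 0))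
    have htail := ih (fun i => h i.succ) (fun i => hg i.succ) (fun i => m i.succ)
    rw [← Function.comp_assoc, h0', Function.comp_assoc, htail, Function.comp_assoc]

theorem compIter_add {k : ℕ} (h : Fin k → Z → Z)
    (hc : ∀ i j, h i ∘ h j = h j ∘ h i) (m n : Fin k → ℕ) :
    compIter h (fun i => m i + n i) = compIter h m ∘ compIter h n := by
  induction k with
  | zero => rfl
  | succ k ih =>
    rw [compIter_succ, compIter_succ h m, compIter_succ h n, Function.iterate_add (h 0)]
    have htail := ih (fun i => h i.succ) (fun i j => hc i.succ j.succ)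
      (fun i => m i.succ) (fun i => n i.succ)
    rw [htail]
    have hAB : (h 0)^[n 0] ∘ compIter (fun i => h i.succ) (fun i => m i.succ)
        = compIter (fun i => h i.succ) (fun i => m i.succ) ∘ (h 0)^[n 0] := by
      apply comm_compIter
      intro i
      have hcom : ∀ x, h 0 (h i.succ x) = h i.succ (h 0 x) :=
        fun x => congrFun (hc 0 i.succ) x
      exact funext (Function.Commute.iterate_left hcom (n 0))
    calc (h 0)^[m 0] ∘ (h 0)^[n 0]
          ∘ (compIter (fun i => h i.succ) (fun i => m i.succ)
            ∘ compIter (fun i => h i.succ) (fun i => n i.succ))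
        = (h 0)^[m 0] ∘ ((h 0)^[n 0]
          ∘ compIter (fun i => h i.succ) (fun i => m i.succ))
            ∘ compIter (fun i => h i.succ) (fun i => n i.succ) := by
          rw [Function.comp_assoc]
      _ = _ := by rw [hAB]; rfl

theorem isLocalHomeomorph_id : IsLocalHomeomorph (id : Z → Z) :=
  (Homeomorph.refl Z).isLocalHomeomorph

theorem isLocalHomeomorph_iterate {f : Z → Z} (hf : IsLocalHomeomorph f) (n : ℕ) :
    IsLocalHomeomorph (f^[n]) := by
  induction n with
  | zero => exact isLocalHomeomorph_id
  | succ n ih => rw [Function.iterate_succ]; exact ih.comp hf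

theorem isLocalHomeomorph_compIter {k : ℕ} {h : Fin k → Z → Z}
    (hlh : ∀ i, IsLocalHomeomorph (h i)) (m : Fin k → ℕ) :
    IsLocalHomeomorph (compIter h m) := by
  induction k with
  | zero => exact isLocalHomeomorph_id
  | succ k ih =>
    rw [compIter_succ]
    exact (isLocalHomeomorph_iterate (hlh 0) (m 0)).comp (ih (fun i => hlh i.succ) _)

/-- sup of fibre cardinalities -/
noncomputable def fibSup (f : Z → Z) : ℝ := ⨆ z, (Nat.card (f ⁻¹' {z}) : ℝ)

theorem fibSup_nonneg (f : Z → Z) : 0 ≤ fibSup f :=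
  Real.iSup_nonneg fun _ => Nat.cast_nonneg _

theorem card_fiber_eq_transfer_one {f : Z → Z} {z : Z} (hfin : (f ⁻¹' {z}).Finite) :
    (Nat.card (f ⁻¹' {z}) : ℝ) = ∑ᶠ w ∈ f ⁻¹' {z}, (1 : ℝ) := by
  rw [transfer_eq_sum hfin, Finset.sum_const, nsmul_eq_mul, mul_one,
    ← Set.ncard_eq_toFinset_card _ hfin, Nat.card_coe_set_eq]

section CompactCase
variable [CompactSpace Z] [T2Space Z] [Nonempty Z]

theorem bddAbove_card_fiber {f : Z → Z} (hf : IsLocalHomeomorph f) :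
    BddAbove (Set.range fun z => (Nat.card (f ⁻¹' {z}) : ℝ)) := by
  have hc : Continuous fun z => ∑ᶠ w ∈ f ⁻¹' {z}, (1 : ℝ) :=
    transfer_continuous hf continuous_const
  have : (fun z => (Nat.card (f ⁻¹' {z}) : ℝ)) = fun z => ∑ᶠ w ∈ f ⁻¹' {z}, (1 : ℝ) :=
    funext fun z => card_fiber_eq_transfer_one (fiber_finite hf z)
  rw [this]
  exact (isCompact_range hc).bddAbove

theorem card_fiber_le_fibSup {f : Z → Z} (hf : IsLocalHomeomorph f) (z : Z) :
    (Nat.card (f ⁻¹' {z}) : ℝ) ≤ fibSup f :=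
  le_ciSup (bddAbove_card_fiber hf) z

theorem fibSup_id : fibSup (id : Z → Z) = 1 := by
  have : ∀ z : Z, (Nat.card ((id : Z → Z) ⁻¹' {z}) : ℝ) = 1 := by
    intro z
    rw [Set.preimage_id]
    simp
  simp only [fibSup, this, ciSup_const]

theorem one_le_fibSup {f : Z → Z} (hf : IsLocalHomeomorph f)
    (hs : Function.Surjective f) : 1 ≤ fibSup f := by
  obtain ⟨z⟩ := ‹Nonempty Z›
  refine le_trans ?_ (card_fiber_le_fibSup hf z)
  have hne : (f ⁻¹' {z}).Nonempty := by
    obtain ⟨w, hw⟩ := hs z; exact ⟨w, hw⟩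
  have : 0 < Nat.card (f ⁻¹' {z}) := by
    rw [Nat.card_pos_iff]
    exact ⟨hne.to_subtype, (fiber_finite hf z).to_subtype⟩
  exact_mod_cast this

theorem transfer_le_const {f : Z → Z} (hf : IsLocalHomeomorph f) {a : Z → ℝ} {Ma : ℝ}
    (hMa : ∀ w, |a w| ≤ Ma) (z : Z) :
    |∑ᶠ w ∈ f ⁻¹' {z}, a w| ≤ fibSup f * Ma := by
  have hMa0 : 0 ≤ Ma := le_trans (abs_nonneg _) (hMa (Classical.arbitrary Z))
  have hfin := fiber_finite hf z
  rw [transfer_eq_sum hfin]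
  calc |∑ w ∈ hfin.toFinset, a w| ≤ ∑ w ∈ hfin.toFinset, |a w| :=
        Finset.abs_sum_le_sum_abs _ _
    _ ≤ ∑ _w ∈ hfin.toFinset, Ma := Finset.sum_le_sum fun w _ => hMa w
    _ = (Nat.card (f ⁻¹' {z}) : ℝ) * Ma := by
        rw [Finset.sum_const, nsmul_eq_mul, ← Set.ncard_eq_toFinset_card _ hfin,
          Nat.card_coe_set_eq]
    _ ≤ fibSup f * Ma := by
        exact mul_le_mul_of_nonneg_right (card_fiber_le_fibSup hf z) hMa0

theorem transfer_mono {f : Z → Z} (hf : IsLocalHomeomorph f) {a b : Z → ℝ}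
    (hab : ∀ w, a w ≤ b w) (z : Z) :
    ∑ᶠ w ∈ f ⁻¹' {z}, a w ≤ ∑ᶠ w ∈ f ⁻¹' {z}, b w := by
  have hfin := fiber_finite hf z
  rw [transfer_eq_sum hfin, transfer_eq_sum hfin]
  exact Finset.sum_le_sum fun w _ => hab w

theorem transfer_nonneg {f : Z → Z} (hf : IsLocalHomeomorph f) {a : Z → ℝ}
    (ha : ∀ w, 0 ≤ a w) (z : Z) : 0 ≤ ∑ᶠ w ∈ f ⁻¹' {z}, a w := by
  have hfin := fiber_finite hf z
  rw [transfer_eq_sum hfin]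
  exact Finset.sum_nonneg fun w _ => ha w

theorem fibSup_comp_le {f g : Z → Z} (hf : IsLocalHomeomorph f) (hg : IsLocalHomeomorph g) :
    fibSup (f ∘ g) ≤ fibSup f * fibSup g := by
  apply ciSup_le
  intro z
  have hfin := fiber_finite (hf.comp hg) z
  rw [card_fiber_eq_transfer_one hfin,
    transfer_comp (fiber_finite hf) (fiber_finite hg)]
  calc ∑ᶠ v ∈ f ⁻¹' {z}, ∑ᶠ w ∈ g ⁻¹' {v}, (1 : ℝ)
      ≤ ∑ᶠ v ∈ f ⁻¹' {z}, fibSup g := by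
        apply transfer_mono hf
        intro v
        rw [← card_fiber_eq_transfer_one (fiber_finite hg v)]
        exact card_fiber_le_fibSup hg v
    _ ≤ fibSup f * fibSup g := by
        have := transfer_le_const hf (a := fun _ => fibSup g) (Ma := fibSup g)
          (fun w => by rw [abs_of_nonneg (fibSup_nonneg g)]) z
        calc ∑ᶠ v ∈ f ⁻¹' {z}, fibSup g
            ≤ |∑ᶠ v ∈ f ⁻¹' {z}, (fun _ => fibSup g) v| := le_abs_self _
          _ ≤ fibSup f * fibSup g := this

theorem fibSup_iterate_le {f : Z → Z} (hf : IsLocalHomeomorph f) (n : ℕ) :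
    fibSup (f^[n]) ≤ fibSup f ^ n := by
  induction n with
  | zero => simp [fibSup_id]
  | succ n ih =>
    rw [Function.iterate_succ']
    calc fibSup (f ∘ f^[n]) ≤ fibSup f * fibSup f^[n] :=
          fibSup_comp_le hf (isLocalHomeomorph_iterate hf n)
      _ ≤ fibSup f * fibSup f ^ n :=
          mul_le_mul_of_nonneg_left ih (fibSup_nonneg f)
      _ = fibSup f ^ (n + 1) := by ring


theorem betaC_eq (f : Z → Z) :
    betaC f = Filter.limsup (fun j : ℕ => Real.log (fibSup (f^[j])) / j) Filter.atTop := rfl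

set_option maxHeartbeats 1000000 in
theorem fibSup_compIter_le {k : ℕ} {h : Fin k → Z → Z}
    (hlh : ∀ i, IsLocalHomeomorph (h i)) (m : Fin k → ℕ) :
    fibSup (compIter h m) ≤ ∏ i, fibSup ((h i)^[m i]) := by
  induction k with
  | zero =>
    have : compIter h m = id := rfl
    simp [this, fibSup_id]
  | succ k ih =>
    rw [compIter_succ, Fin.prod_univ_succ]
    have h1 : fibSup ((h 0)^[m 0] ∘ compIter (fun i => h i.succ) (fun i => m i.succ))
        ≤ fibSup ((h 0)^[m 0]) * fibSup (compIter (fun i => h i.succ) (fun i => m i.succ)) :=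
      fibSup_comp_le (isLocalHomeomorph_iterate (hlh 0) (m 0))
        (isLocalHomeomorph_compIter (fun i => hlh i.succ) (fun i => m i.succ))
    have h2 : fibSup (compIter (fun i => h i.succ) (fun i => m i.succ))
        ≤ ∏ i : Fin k, fibSup ((h i.succ)^[m i.succ]) :=
      ih (fun i => hlh i.succ) (fun i => m i.succ)
    refine le_trans h1 ?_
    exact mul_le_mul_of_nonneg_left h2 (fibSup_nonneg _)

theorem summable_exp_mul_fibSup {f : Z → Z} (hf : IsLocalHomeomorph f)
    (hs : Function.Surjective f) {c : ℝ} (hc : betaC f < c) :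
    Summable (fun j : ℕ => Real.exp (-(c * j)) * fibSup (f^[j])) := by
  have hlhj : ∀ j, IsLocalHomeomorph (f^[j]) := isLocalHomeomorph_iterate hf
  have hsj : ∀ j : ℕ, Function.Surjective (f^[j]) := fun j => Function.Surjective.iterate hs j
  have hN1 : ∀ j, 1 ≤ fibSup (f^[j]) := fun j => one_le_fibSup (hlhj j) (hsj j)
  have hN0 : ∀ j, 0 < fibSup (f^[j]) := fun j => lt_of_lt_of_le one_pos (hN1 j)
  have hNpow : ∀ j, fibSup (f^[j]) ≤ fibSup f ^ j := fibSup_iterate_le hf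
  have hbdd : IsBoundedUnder (· ≤ ·) atTop (fun j : ℕ => Real.log (fibSup (f^[j])) / j) := by
    refine isBoundedUnder_of ⟨max 0 (Real.log (fibSup f)), fun j => ?_⟩
    rcases Nat.eq_zero_or_pos j with hj | hj
    · subst hj; simp
    · have hjpos : (0 : ℝ) < j := by exact_mod_cast hj
      refine le_trans ?_ (le_max_right _ _)
      rw [div_le_iff₀ hjpos]
      calc Real.log (fibSup (f^[j])) ≤ Real.log (fibSup f ^ j) :=
            Real.log_le_log (hN0 j) (hNpow j)
        _ = j * Real.log (fibSup f) := by rw [Real.log_pow]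
        _ = Real.log (fibSup f) * j := mul_comm _ _
  set b : ℝ := (betaC f + c) / 2 with hb
  have hb1 : betaC f < b := by rw [hb]; linarith
  have hb2 : b < c := by rw [hb]; linarith
  have hc' : Filter.limsup (fun j : ℕ => Real.log (fibSup (f^[j])) / j) Filter.atTop < b := by
    rw [← betaC_eq]; exact hb1
  have hev : ∀ᶠ j in atTop, Real.log (fibSup (f^[j])) / j < b :=
    eventually_lt_of_limsup_lt hc' hbdd
  obtain ⟨J, hJ⟩ := eventually_atTop.mp (hev.and (eventually_ge_atTop 1))
  have hbound : ∀ j, J ≤ j →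
      Real.exp (-(c * j)) * fibSup (f^[j]) ≤ Real.exp (b - c) ^ j := by
    intro j hj
    obtain ⟨h1, h2⟩ := hJ j hj
    have hjpos : (0 : ℝ) < j := by exact_mod_cast h2
    have hlog : Real.log (fibSup (f^[j])) < b * j := by
      rw [div_lt_iff₀ hjpos] at h1; linarith [h1]
    have hNle : fibSup (f^[j]) ≤ Real.exp (b * j) := by
      rw [← Real.exp_log (hN0 j)]
      exact Real.exp_le_exp.mpr hlog.le
    calc Real.exp (-(c * j)) * fibSup (f^[j])
        ≤ Real.exp (-(c * j)) * Real.exp (b * j) :=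
          mul_le_mul_of_nonneg_left hNle (Real.exp_nonneg _)
      _ = Real.exp ((b - c) * j) := by rw [← Real.exp_add]; ring_nf
      _ = Real.exp (b - c) ^ j := by
          rw [mul_comm, Real.exp_nat_mul]
  rw [← summable_nat_add_iff J]
  have hq0 : (0 : ℝ) ≤ Real.exp (b - c) := Real.exp_nonneg _
  have hq1 : Real.exp (b - c) < 1 := by
    rw [← Real.exp_zero]
    exact Real.exp_lt_exp.mpr (by linarith)
  have hqs : Summable (fun j : ℕ => Real.exp (b - c) ^ (j + J)) := by
    simp_rw [pow_add]
    exact (summable_geometric_of_lt_one hq0 hq1).mul_right _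
  exact Summable.of_nonneg_of_le (fun j => mul_nonneg (Real.exp_nonneg _) (fibSup_nonneg _))
    (fun j => hbound (j + J) (Nat.le_add_left J j)) hqs

end CompactCase

theorem summable_pi_prod {k : ℕ} (g : Fin k → ℕ → ℝ) (hg : ∀ i, Summable (g i))
    (h0 : ∀ i j, 0 ≤ g i j) :
    Summable (fun m : Fin k → ℕ => ∏ i, g i (m i)) := by
  induction k with
  | zero => exact Summable.of_finite
  | succ k ih =>
    have hp := Summable.mul_of_nonneg (hg 0)
      (ih (fun i => g i.succ) (fun i => hg i.succ) (fun i j => h0 i.succ j))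
      (fun j => h0 0 j)
      (fun m => Finset.prod_nonneg fun i _ => h0 i.succ (m i))
    have hS : Summable ((fun x : ℕ × (Fin k → ℕ) => g 0 x.1 * ∏ i, g i.succ (x.2 i)) ∘
        (Fin.consEquiv fun _ : Fin (k + 1) => ℕ).symm) :=
      ((Fin.consEquiv fun _ : Fin (k + 1) => ℕ).symm.summable_iff).mpr hp
    refine hS.congr fun m => ?_
    rw [Fin.prod_univ_succ]
    rfl
/-- shift equivalence onto the set of multi-indices supported above `e_J`. -/
def shiftEquiv {k : ℕ} (J : Finset (Fin k)) :
    (Fin k → ℕ) ≃ {m : Fin k → ℕ // ∀ i ∈ J, 1 ≤ m i} where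
  toFun n := ⟨fun i => n i + (if i ∈ J then 1 else 0), fun i hi => by simp [hi]⟩
  invFun m := fun i => m.1 i - (if i ∈ J then 1 else 0)
  left_inv n := by funext i; simp
  right_inv m := by
    apply Subtype.ext; funext i
    by_cases hi : i ∈ J
    · have := m.2 i hi
      simp only [if_pos hi]
      omega
    · simp [hi]

theorem shiftEquiv_coe {k : ℕ} (J : Finset (Fin k)) (n : Fin k → ℕ) :
    ((shiftEquiv J n : {m : Fin k → ℕ // ∀ i ∈ J, 1 ≤ m i}) : Fin k → ℕ)
      = fun i => n i + (if i ∈ J then 1 else 0) := rfl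

end Aux

set_option maxHeartbeats 1000000 in
/-- if `μ = ∑_{n ∈ ℕ^k} e^{-β r·n} R^n ε`, then `μ` satisfies the
subinvariance relation, and `ε = ∏_i (1 - e^{-β r_i} R^{e_i}) μ`. -/
theorem subinvariance_and_recovery {Z : Type*} [TopologicalSpace Z] [CompactSpace Z]
    [T2Space Z] [MeasurableSpace Z] [BorelSpace Z] {k : ℕ} (h : Fin k → Z → Z)
    (hlh : ∀ i, IsLocalHomeomorph (h i))
    (hsurj : ∀ i, Function.Surjective (h i))
    (hcomm : ∀ i j : Fin k, (h i) ∘ (h j) = (h j) ∘ (h i))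
    (r : Fin k → ℝ) (hr : ∀ i, 0 < r i)
    (β : ℝ) (hβ : 0 < β) (hβc : ∀ i, betaC (h i) < β * r i)
    (ε : Measure Z) [IsFiniteMeasure ε] [MeasureTheory.Measure.Regular ε]
    (μ : Measure Z) [IsFiniteMeasure μ]
    (hμ : ∀ a : Z → ℝ, Continuous a →
      ∫ z, a z ∂μ =
        ∑' n : Fin k → ℕ,
          Real.exp (-(β * ∑ i, r i * n i)) *
            ∫ z, (∑ᶠ w ∈ (compIter h n) ⁻¹' {z}, a w) ∂ε) :
    (∀ K : Finset (Fin k), ∀ a : Z → ℝ, Continuous a → (∀ z, 0 ≤ a z) →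
      0 ≤ ∑ J ∈ K.powerset,
        (-1 : ℝ) ^ J.card * Real.exp (-(β * ∑ i ∈ J, r i)) *
          ∫ z, (∑ᶠ w ∈ (compSet h J) ⁻¹' {z}, a w) ∂μ) ∧
    (∀ a : Z → ℝ, Continuous a →
      ∫ z, a z ∂ε =
        ∑ J : Finset (Fin k),
          (-1 : ℝ) ^ J.card * Real.exp (-(β * ∑ i ∈ J, r i)) *
            ∫ z, (∑ᶠ w ∈ (compSet h J) ⁻¹' {z}, a w) ∂μ) := by
  classical
  rcases isEmpty_or_nonempty Z with hZ | hZ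
  · have hμ0 : μ = 0 := Subsingleton.elim μ 0
    have hε0 : ε = 0 := Subsingleton.elim ε 0
    constructor
    · intro K a ha hpos
      simp [hμ0]
    · intro a ha
      simp [hμ0, hε0]
  have hlhI : ∀ m : Fin k → ℕ, IsLocalHomeomorph (compIter h m) :=
    isLocalHomeomorph_compIter hlh
  have hfinI : ∀ m : Fin k → ℕ, ∀ z, ((compIter h m) ⁻¹' {z}).Finite :=
    fun m => fiber_finite (hlhI m)
  set eJ : Finset (Fin k) → (Fin k → ℕ) := fun J i => if i ∈ J then 1 else 0 with heJ
  set M : (Fin k → ℕ) → Finset (Fin k) :=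
    fun m => Finset.univ.filter (fun i => 1 ≤ m i) with hM
  have key : ∀ (K : Finset (Fin k)) (a : Z → ℝ), Continuous a →
      (∑ J ∈ K.powerset, (-1 : ℝ) ^ J.card * Real.exp (-(β * ∑ i ∈ J, r i)) *
        ∫ z, (∑ᶠ w ∈ (compSet h J) ⁻¹' {z}, a w) ∂μ)
      = ∑' m : Fin k → ℕ,
          (if K ∩ M m = ∅ then
            Real.exp (-(β * ∑ i, r i * m i)) *
              ∫ z, (∑ᶠ w ∈ (compIter h m) ⁻¹' {z}, a w) ∂ε
          else 0) := by
    intro K a ha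
    set g : (Fin k → ℕ) → ℝ := fun m =>
      Real.exp (-(β * ∑ i, r i * m i)) *
        ∫ z, (∑ᶠ w ∈ (compIter h m) ⁻¹' {z}, a w) ∂ε with hg
    -- bound on a
    obtain ⟨Ma, hMa⟩ : ∃ Ma : ℝ, ∀ w, |a w| ≤ Ma := by
      obtain ⟨Ma, hMa⟩ := (isCompact_range ha.abs).bddAbove
      exact ⟨Ma, fun w => hMa ⟨w, rfl⟩⟩
    have hMa0 : 0 ≤ Ma := le_trans (abs_nonneg _) (hMa (Classical.arbitrary Z))
    -- summable majorant
    set q : Fin k → ℕ → ℝ := fun i j => Real.exp (-(β * r i * j)) * fibSup ((h i)^[j]) with hq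
    have hq0 : ∀ i j, 0 ≤ q i j := fun i j =>
      mul_nonneg (Real.exp_nonneg _) (fibSup_nonneg _)
    have hqsum : ∀ i, Summable (q i) := fun i =>
      summable_exp_mul_fibSup (hlh i) (hsurj i) (hβc i)
    have hP : Summable (fun m : Fin k → ℕ => ∏ i, q i (m i)) := summable_pi_prod q hqsum hq0
    -- bound on g
    have hgbound : ∀ m, |g m| ≤ (Ma * (ε Set.univ).toReal) * ∏ i, q i (m i) := by
      intro m
      have hb1 : ∀ z, ‖∑ᶠ w ∈ (compIter h m) ⁻¹' {z}, a w‖ ≤ fibSup (compIter h m) * Ma := by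
        intro z
        rw [Real.norm_eq_abs]
        exact transfer_le_const (hlhI m) hMa z
      have hb2 : ‖∫ z, (∑ᶠ w ∈ (compIter h m) ⁻¹' {z}, a w) ∂ε‖ ≤
          (fibSup (compIter h m) * Ma) * (ε Set.univ).toReal :=
        norm_integral_le_of_norm_le_const (Filter.Eventually.of_forall hb1)
      have hexp : Real.exp (-(β * ∑ i, r i * (m i : ℝ))) =
          ∏ i, Real.exp (-(β * r i * (m i : ℝ))) := by
        rw [← Real.exp_sum]
        congr 1
        rw [Finset.mul_sum, ← Finset.sum_neg_distrib]
        exact Finset.sum_congr rfl fun i _ => by ring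
      have hfs : fibSup (compIter h m) ≤ ∏ i, fibSup ((h i)^[m i]) :=
        fibSup_compIter_le hlh m
      have htoReal : (0:ℝ) ≤ (ε Set.univ).toReal := ENNReal.toReal_nonneg
      calc |g m| = Real.exp (-(β * ∑ i, r i * (m i : ℝ))) *
            ‖∫ z, (∑ᶠ w ∈ (compIter h m) ⁻¹' {z}, a w) ∂ε‖ := by
            rw [hg, Real.norm_eq_abs, abs_mul, abs_of_pos (Real.exp_pos _)]
        _ ≤ Real.exp (-(β * ∑ i, r i * (m i : ℝ))) *
            ((fibSup (compIter h m) * Ma) * (ε Set.univ).toReal) :=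
            mul_le_mul_of_nonneg_left hb2 (Real.exp_nonneg _)
        _ ≤ Real.exp (-(β * ∑ i, r i * (m i : ℝ))) *
            (((∏ i, fibSup ((h i)^[m i])) * Ma) * (ε Set.univ).toReal) := by
            gcongr
        _ = (Ma * (ε Set.univ).toReal) * ∏ i, q i (m i) := by
            rw [hexp, hq]
            rw [Finset.prod_mul_distrib]
            ring
    have hgsum : Summable g := by
      refine Summable.of_norm_bounded (hP.mul_left (Ma * (ε Set.univ).toReal)) ?_
      intro m
      rw [Real.norm_eq_abs]
      exact hgbound m
    -- Step A: evaluate each μ-integral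
    have hA : ∀ J : Finset (Fin k),
        (∫ z, (∑ᶠ w ∈ (compSet h J) ⁻¹' {z}, a w) ∂μ)
        = ∑' n : Fin k → ℕ, Real.exp (-(β * ∑ i, r i * n i)) *
            ∫ z, (∑ᶠ w ∈ (compIter h (fun i => n i + eJ J i)) ⁻¹' {z}, a w) ∂ε := by
      intro J
      have hcontJ : Continuous fun z => ∑ᶠ w ∈ (compSet h J) ⁻¹' {z}, a w :=
        transfer_continuous (hlhI (eJ J)) ha
      rw [hμ _ hcontJ]
      refine tsum_congr fun n => ?_
      congr 1
      have hfun : ∀ z : Z, (∑ᶠ w ∈ (compIter h n) ⁻¹' {z}, ∑ᶠ u ∈ (compSet h J) ⁻¹' {w}, a u)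
          = ∑ᶠ w ∈ (compIter h (fun i => n i + eJ J i)) ⁻¹' {z}, a w := by
        intro z
        rw [compIter_add h hcomm n (eJ J)]
        exact (transfer_comp (hfinI n) (hfinI (eJ J)) a z).symm
      exact integral_congr_ae (Filter.Eventually.of_forall fun z => hfun z)
    -- exponential bookkeeping
    have hexpJ : ∀ (J : Finset (Fin k)) (n : Fin k → ℕ),
        Real.exp (-(β * ∑ i ∈ J, r i)) * Real.exp (-(β * ∑ i, r i * (n i : ℝ)))
        = Real.exp (-(β * ∑ i, r i * (((n i + eJ J i : ℕ)) : ℝ))) := by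
      intro J n
      rw [← Real.exp_add]
      congr 1
      have h1 : ∑ i, r i * (((n i + eJ J i : ℕ)) : ℝ)
          = (∑ i ∈ J, r i) + ∑ i, r i * (n i : ℝ) := by
        have h2 : ∀ i : Fin k, i ∈ Finset.univ → r i * (((n i + eJ J i : ℕ)) : ℝ)
            = (if i ∈ J then r i else 0) + r i * (n i : ℝ) := by
          intro i _
          by_cases hi : i ∈ J <;> simp [heJ, hi] <;> push_cast <;> ring
        rw [Finset.sum_congr rfl h2, Finset.sum_add_distrib, Finset.sum_ite_mem,
          Finset.univ_inter]
      rw [h1]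
      ring
    -- Step B+C: per-J reduction to an indicator sum
    set S : Finset (Fin k) → Set (Fin k → ℕ) := fun J => {m | ∀ i ∈ J, 1 ≤ m i} with hS
    have hBC : ∀ J : Finset (Fin k),
        (-1 : ℝ) ^ J.card * Real.exp (-(β * ∑ i ∈ J, r i)) *
          ∫ z, (∑ᶠ w ∈ (compSet h J) ⁻¹' {z}, a w) ∂μ
        = ∑' m : Fin k → ℕ,
            Set.indicator (S J) (fun m' => (-1 : ℝ) ^ J.card * g m') m := by
      intro J
      rw [hA J, mul_assoc, ← tsum_mul_left, ← tsum_mul_left]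
      have hstep : ∀ n : Fin k → ℕ, (-1 : ℝ) ^ J.card * (Real.exp (-(β * ∑ i ∈ J, r i)) *
          (Real.exp (-(β * ∑ i, r i * (n i : ℝ))) *
            ∫ z, (∑ᶠ w ∈ (compIter h (fun i => n i + eJ J i)) ⁻¹' {z}, a w) ∂ε))
          = (-1 : ℝ) ^ J.card * g (fun i => n i + eJ J i) := by
        intro n
        rw [hg, ← mul_assoc (Real.exp _), hexpJ J n]
      calc ∑' n : Fin k → ℕ, (-1 : ℝ) ^ J.card * (Real.exp (-(β * ∑ i ∈ J, r i)) *
            (Real.exp (-(β * ∑ i, r i * (n i : ℝ))) *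
              ∫ z, (∑ᶠ w ∈ (compIter h (fun i => n i + eJ J i)) ⁻¹' {z}, a w) ∂ε))
          = ∑' n : Fin k → ℕ, (-1 : ℝ) ^ J.card * g (fun i => n i + eJ J i) :=
            tsum_congr hstep
        _ = ∑' n : Fin k → ℕ,
              (fun m : {m : Fin k → ℕ // ∀ i ∈ J, 1 ≤ m i} =>
                (-1 : ℝ) ^ J.card * g (m : Fin k → ℕ)) (shiftEquiv J n) :=
            tsum_congr fun n => by simp only [shiftEquiv_coe, heJ]
        _ = ∑' m : {m : Fin k → ℕ // ∀ i ∈ J, 1 ≤ m i},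
              (-1 : ℝ) ^ J.card * g (m : Fin k → ℕ) :=
            (shiftEquiv J).tsum_eq
              (fun m : {m : Fin k → ℕ // ∀ i ∈ J, 1 ≤ m i} =>
                (-1 : ℝ) ^ J.card * g (m : Fin k → ℕ))
        _ = ∑' m : Fin k → ℕ, Set.indicator (S J) (fun m' => (-1 : ℝ) ^ J.card * g m') m :=
            tsum_subtype (S J) (fun m' => (-1 : ℝ) ^ J.card * g m')
    calc ∑ J ∈ K.powerset, (-1 : ℝ) ^ J.card * Real.exp (-(β * ∑ i ∈ J, r i)) *
          ∫ z, (∑ᶠ w ∈ (compSet h J) ⁻¹' {z}, a w) ∂μ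
        = ∑ J ∈ K.powerset, ∑' m : Fin k → ℕ,
            Set.indicator (S J) (fun m' => (-1 : ℝ) ^ J.card * g m') m :=
          Finset.sum_congr rfl fun J _ => hBC J
      _ = ∑' m : Fin k → ℕ, ∑ J ∈ K.powerset,
            Set.indicator (S J) (fun m' => (-1 : ℝ) ^ J.card * g m') m :=
          (Summable.tsum_finsetSum (fun J _ => (hgsum.mul_left _).indicator _)).symm
      _ = ∑' m : Fin k → ℕ, (if K ∩ M m = ∅ then g m else 0) := by
          refine tsum_congr fun m => ?_
          have hmem : ∀ J : Finset (Fin k), m ∈ S J ↔ J ⊆ M m := by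
            intro J
            simp [hS, hM, Finset.subset_iff]
          have hterm : ∀ J : Finset (Fin k),
              Set.indicator (S J) (fun m' => (-1 : ℝ) ^ J.card * g m') m
              = if J ⊆ M m then (-1 : ℝ) ^ J.card * g m else 0 := by
            intro J
            rw [Set.indicator_apply]
            by_cases hJm : m ∈ S J
            · rw [if_pos hJm, if_pos ((hmem J).mp hJm)]
            · rw [if_neg hJm, if_neg (fun hc => hJm ((hmem J).mpr hc))]
          rw [Finset.sum_congr rfl fun J _ => hterm J]
          rw [← Finset.sum_filter]
          have hps : K.powerset.filter (fun J => J ⊆ M m) = (K ∩ M m).powerset := by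
            ext J
            simp only [Finset.mem_filter, Finset.mem_powerset, Finset.subset_inter_iff]
          have hsumpow : (∑ J ∈ (K ∩ M m).powerset, (-1 : ℝ) ^ J.card)
              = if K ∩ M m = ∅ then 1 else 0 := by
            have hz := Finset.sum_powerset_neg_one_pow_card (x := K ∩ M m) (α := Fin k)
            have : ((∑ J ∈ (K ∩ M m).powerset, (-1 : ℤ) ^ J.card : ℤ) : ℝ)
                = ∑ J ∈ (K ∩ M m).powerset, (-1 : ℝ) ^ J.card := by push_cast; rfl
            rw [← this, hz]
            split_ifs <;> simp
          rw [hps, ← Finset.sum_mul, hsumpow, ite_mul, one_mul, zero_mul]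
  constructor
  · intro K a ha hpos
    rw [key K a ha]
    refine tsum_nonneg fun m => ?_
    split_ifs with hKM
    · refine mul_nonneg (Real.exp_nonneg _) (integral_nonneg fun z => ?_)
      exact transfer_nonneg (hlhI m) hpos z
    · exact le_refl 0
  · intro a ha
    rw [← Finset.powerset_univ, key Finset.univ a ha]
    have hpt : ∀ m : Fin k → ℕ,
        (if Finset.univ ∩ M m = ∅ then
          Real.exp (-(β * ∑ i, r i * m i)) *
            ∫ z, (∑ᶠ w ∈ (compIter h m) ⁻¹' {z}, a w) ∂ε
        else 0)
        = (if m = (fun _ => 0) then ∫ z, a z ∂ε else 0) := by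
      intro m
      have hcond : (Finset.univ ∩ M m = ∅) ↔ m = (fun _ => 0) := by
        rw [Finset.univ_inter]
        constructor
        · intro hemp
          funext i
          by_contra hne
          have h1 : 1 ≤ m i := Nat.one_le_iff_ne_zero.mpr hne
          have hiM : i ∈ M m := by simp [hM, h1]
          rw [hemp] at hiM
          exact absurd hiM (Finset.notMem_empty i)
        · intro hm
          apply Finset.eq_empty_of_forall_notMem
          intro i hi
          rw [hM] at hi
          simp only [Finset.mem_filter] at hi
          have h2 := hi.2
          rw [hm] at h2
          simp at h2
      by_cases hc : m = (fun _ => 0)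
      · rw [if_pos (hcond.mpr hc), if_pos hc, hc]
        have hzero : compIter h (fun _ => 0) = id := compIter_zero h
        have hpt2 : ∀ z : Z, (∑ᶠ w ∈ (compIter h (fun _ => (0:ℕ))) ⁻¹' {z}, a w) = a z := by
          intro z
          rw [hzero, Set.preimage_id, finsum_mem_singleton]
        have h1 : (∑ i, r i * (((fun _ => 0 : Fin k → ℕ) i : ℕ) : ℝ)) = 0 := by simp
        rw [h1, mul_zero, neg_zero, Real.exp_zero, one_mul]
        exact integral_congr_ae (Filter.Eventually.of_forall fun z => hpt2 z)
      · rw [if_neg (fun hcc => hc (hcond.mp hcc)), if_neg hc]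
    rw [tsum_congr hpt, tsum_ite_eq]
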